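/- Let n ≥ 3 and consider a best-worst method matrix with best alternative B and worst alternative W, i.e., positive reciprocal entries a_{Bj}, a_{jB}, a_{Wj}, a_{jW} are given for all j. If a vector y ∈ ℝ^n satisfies the logarithmic least squares normal equations L y = r (where L is the graph Laplacian of the star-pair comparison graph and r_i is the sum of logarithms of the known entries in row i) together with the normalization ∑_i y_i = 0, then n·y_B = log(∏_{k=1}^n a_{Bk}) and n·y_W = log(∏_{k=1}^n a_{Wk}). -/

import Mathlib

open Finset

/-- For a best-worst method matrix (known entries in rows/columns of the
best alternative `B` and worst alternative `W`), any solution `y` of the normalized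
logarithmic least squares normal equations `L y = r`, `∑ y = 0` satisfies
`n·y_B = log ∏ a_{Bk}` and `n·y_W = log ∏ a_{Wk}`. -/
theorem bwm_llsm_best_worst_rows (n : ℕ) (hn : 3 ≤ n) (B W : Fin n) (hBW : B ≠ W)
    (a : Fin n → Fin n → ℝ)
    (hpos : ∀ i j : Fin n, (i = B ∨ i = W ∨ j = B ∨ j = W) → 0 < a i j)
    (hdiag : ∀ i, a i i = 1)
    (hrec : ∀ i j : Fin n, (i = B ∨ i = W ∨ j = B ∨ j = W) → a i j * a j i = 1)
    (L : Fin n → Fin n → ℝ)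
    (hL : ∀ i j : Fin n, L i j =
      if i = j then (if i = B ∨ i = W then (n : ℝ) - 1 else 2)
      else (if i = B ∨ i = W ∨ j = B ∨ j = W then -1 else 0))
    (r : Fin n → ℝ)
    (hr : ∀ i : Fin n, r i =
      Real.log (∏ j ∈ univ.filter (fun j => i = B ∨ i = W ∨ j = B ∨ j = W), a i j))
    (y : Fin n → ℝ)
    (hsys : ∀ i, ∑ j, L i j * y j = r i)
    (hnorm : ∑ i, y i = 0) :
    (n : ℝ) * y B = Real.log (∏ k, a B k) ∧
    (n : ℝ) * y W = Real.log (∏ k, a W k) := by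
  have key : ∀ i : Fin n, (i = B ∨ i = W) → (n : ℝ) * y i = Real.log (∏ k, a i k) := by
    intro i hi
    have hLrow : ∀ j : Fin n, L i j = (if j = i then (n : ℝ) else 0) - 1 := by
      intro j
      rw [hL]
      by_cases h : i = j
      · subst h; simp [hi]
      · have : ¬ j = i := fun hh => h hh.symm
        simp [h, this, hi.imp id Or.inl]
    have hsum : ∑ j, L i j * y j = (n : ℝ) * y i := by
      calc ∑ j, L i j * y j
          = ∑ j, ((if j = i then (n : ℝ) else 0) * y j - y j) := by
            apply Finset.sum_congr rfl; intro j _; rw [hLrow j]; ring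
        _ = (∑ j, (if j = i then (n : ℝ) else 0) * y j) - ∑ j, y j :=
            Finset.sum_sub_distrib _ _
        _ = (n : ℝ) * y i := by
            rw [hnorm, sub_zero, Finset.sum_eq_single i]
            · simp
            · intro b _ hb; simp [hb]
            · intro h; exact absurd (Finset.mem_univ i) h
    have hfilt : (univ.filter (fun j => i = B ∨ i = W ∨ j = B ∨ j = W)) =
        (univ : Finset (Fin n)) := by
      apply Finset.filter_true_of_mem
      intro j _
      rcases hi with h | h
      · exact Or.inl h
      · exact Or.inr (Or.inl h)
    rw [← hsum, hsys i, hr i, hfilt]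
  exact ⟨key B (Or.inl rfl), key W (Or.inr rfl)⟩
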